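/- Let K = {a,b,c,ab,bc} be a path with two edges and L = {u,v,uv} a single edge. Then the join K * L is not isomorphic to the Morse complex M(N) of any simplicial complex N. -/

import Mathlib

open Finset

/-- An abstract simplicial complex on vertex type `V`. -/
structure SComplex (V : Type*) where
  faces : Finset V → Prop
  not_empty : ¬ faces ∅
  down_closed : ∀ {σ τ : Finset V}, faces τ → σ ⊆ τ → σ.Nonempty → faces σ

/-- The complex generated by a set of simplices (downward closure). -/
def ofGens {V : Type*} (gens : Set (Finset V)) : SComplex V where
  faces σ := σ.Nonempty ∧ ∃ τ ∈ gens, σ ⊆ τ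
  not_empty h := by simpa using h.1
  down_closed := by
    rintro σ τ ⟨-, τ', hτ', hsub'⟩ hsub hne
    exact ⟨hne, τ', hτ', hsub.trans hsub'⟩

/-- A primitive (gradient) vector field on `K`: a single regular pair `(σ, τ)`
with `σ` a codimension-one face of `τ`. -/
structure VPair {V : Type*} (K : SComplex V) where
  lo : Finset V
  hi : Finset V
  lo_face : K.faces lo
  hi_face : K.faces hi
  lo_sub : lo ⊆ hi
  card_eq : hi.card = lo.card + 1

noncomputable instance {V : Type*} (K : SComplex V) : DecidableEq (VPair K) :=
  Classical.decEq _

/-- Two primitive pairs share no simplex. -/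
def VPair.Compatible {V : Type*} {K : SComplex V} (p q : VPair K) : Prop :=
  p.lo ≠ q.lo ∧ p.lo ≠ q.hi ∧ p.hi ≠ q.lo ∧ p.hi ≠ q.hi

/-- A discrete vector field: each simplex occurs in at most one pair. -/
def IsDVF {V : Type*} {K : SComplex V} (W : Set (VPair K)) : Prop :=
  ∀ p ∈ W, ∀ q ∈ W, p ≠ q → VPair.Compatible p q

/-- Existence of a nontrivial closed `V`-path. -/
def HasClosedPath {V : Type*} {K : SComplex V} (W : Set (VPair K)) : Prop :=
  ∃ k : ℕ, 0 < k ∧ ∃ c : ZMod k → VPair K, (∀ i, c i ∈ W) ∧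
    ∀ i, (c (i + 1)).lo ⊆ (c i).hi ∧ (c (i + 1)).lo ≠ (c i).lo ∧
      (c (i + 1)).lo.card + 1 = (c i).hi.card

/-- A gradient vector field: a discrete vector field with no nontrivial closed path. -/
def IsGVF {V : Type*} {K : SComplex V} (W : Set (VPair K)) : Prop :=
  IsDVF W ∧ ¬ HasClosedPath W

/-- The Morse complex of `K`: vertices are primitive gradient vector fields,
simplices are gradient vector fields. -/
def MorseComplex {V : Type*} (K : SComplex V) : SComplex (VPair K) where
  faces S := S.Nonempty ∧ IsGVF {p | p ∈ S}
  not_empty h := by simpa using h.1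
  down_closed := by
    rintro σ τ ⟨hne', hdvf, hnc⟩ hsub hne
    refine ⟨hne, fun p hp q hq hpq => hdvf p (hsub hp) q (hsub hq) hpq, fun h => hnc ?_⟩
    obtain ⟨k, hk, c, hc, hpath⟩ := h
    exact ⟨k, hk, c, fun i => hsub (hc i), hpath⟩

/-- The pure Morse complex: the subcomplex of `MorseComplex K` generated by the
facets of maximum dimension (maximum gradient vector fields). -/
def pureMorse {V : Type*} (K : SComplex V) : SComplex (VPair K) where
  faces S := (MorseComplex K).faces S ∧ ∃ T : Finset (VPair K), S ⊆ T ∧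
      (MorseComplex K).faces T ∧
      ∀ T' : Finset (VPair K), (MorseComplex K).faces T' → T'.card ≤ T.card
  not_empty h := (MorseComplex K).not_empty h.1
  down_closed := by
    rintro σ τ ⟨hτ, T, hsub', hT, hmax⟩ hsub hne
    exact ⟨(MorseComplex K).down_closed hτ hsub hne, T, hsub.trans hsub', hT, hmax⟩

/-- `σ` is a facet (maximal simplex) of `K`. -/
def IsFacet {V : Type*} (K : SComplex V) (σ : Finset V) : Prop :=
  K.faces σ ∧ ∀ τ, K.faces τ → σ ⊆ τ → σ = τ

/-- `w` dominates `w'`: every facet containing `w'` contains `w`. -/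
def Dominates {V : Type*} (K : SComplex V) (w w' : V) : Prop :=
  ∀ σ, IsFacet K σ → w' ∈ σ → w ∈ σ

/-- `K` is minimal: no vertex dominates another vertex. -/
def MinimalComplex {V : Type*} (K : SComplex V) : Prop :=
  ∀ w w' : V, K.faces {w} → K.faces {w'} → w ≠ w' → ¬ Dominates K w w'

/-- Strong collapsibility of a face predicate: a sequence of removals of
dominated vertices reaching a single point. -/
inductive SCAux {V : Type*} : (Finset V → Prop) → Prop
  | point (F : Finset V → Prop) (v : V) (h : ∀ σ, F σ ↔ σ = {v}) : SCAux F
  | step (F : Finset V → Prop) (w w' : V) (hne : w ≠ w') (hw : F {w}) (hw' : F {w'})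
      (hdom : ∀ σ, (F σ ∧ ∀ τ, F τ → σ ⊆ τ → σ = τ) → w' ∈ σ → w ∈ σ)
      (h : SCAux (fun σ => F σ ∧ w' ∉ σ)) : SCAux F

def StronglyCollapsible {V : Type*} (K : SComplex V) : Prop := SCAux K.faces

/-- `F` strongly collapses to `G` by a sequence of removals of dominated vertices. -/
inductive SCTo {V : Type*} : (Finset V → Prop) → (Finset V → Prop) → Prop
  | refl (F : Finset V → Prop) : SCTo F F
  | step (F G : Finset V → Prop) (w w' : V) (hne : w ≠ w') (hw : F {w}) (hw' : F {w'})
      (hdom : ∀ σ, (F σ ∧ ∀ τ, F τ → σ ⊆ τ → σ = τ) → w' ∈ σ → w ∈ σ)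
      (h : SCTo (fun σ => F σ ∧ w' ∉ σ) G) : SCTo F G

/-- Collapsibility (Forman): removal of free pairs down to a point. -/
inductive CollAux {V : Type*} : (Finset V → Prop) → Prop
  | point (F : Finset V → Prop) (v : V) (h : ∀ σ, F σ ↔ σ = {v}) : CollAux F
  | step (F : Finset V → Prop) (σ τ : Finset V) (hστ : σ ⊂ τ) (hσ : F σ) (hτ : F τ)
      (hfree : ∀ ρ, F ρ → σ ⊂ ρ → ρ = τ)
      (h : CollAux (fun ρ => F ρ ∧ ρ ≠ σ ∧ ρ ≠ τ)) : CollAux F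

def Collapsible {V : Type*} (K : SComplex V) : Prop := CollAux K.faces

/-- The degree of a vertex: the number of edges of `K` containing it. -/
noncomputable def sdeg {V : Type*} (K : SComplex V) (x : V) : ℕ :=
  Set.ncard {σ : Finset V | K.faces σ ∧ σ.card = 2 ∧ x ∈ σ}

/-- Image of a finset, with a classical decidability instance. -/
noncomputable def fimage {V W : Type*} (f : V → W) (σ : Finset V) : Finset W :=
  haveI := Classical.decEq W
  σ.image f

/-- An isomorphism between two simplicial complexes given by face predicates. -/
structure ComplexIso {V W : Type*} (F : Finset V → Prop) (G : Finset W → Prop) where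
  toFun : V → W
  invFun : W → V
  left_inv : ∀ x, F {x} → invFun (toFun x) = x
  right_inv : ∀ y, G {y} → toFun (invFun y) = y
  map_face : ∀ σ, F σ → G (fimage toFun σ)
  inv_face : ∀ τ, G τ → F (fimage invFun τ)

/-- The join of two simplicial complexes. -/
def sJoin {V W : Type*} [DecidableEq V] [DecidableEq W] (K : SComplex V) (L : SComplex W) :
    SComplex (V ⊕ W) :=
  ofGens {σ | ∃ α β, (K.faces α ∨ α = ∅) ∧ (L.faces β ∨ β = ∅) ∧
    σ = α.image Sum.inl ∪ β.image Sum.inr}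

/-- The disjoint union of two simplicial complexes. -/
def sDisjUnion {V W : Type*} [DecidableEq V] [DecidableEq W] (K : SComplex V) (L : SComplex W) :
    SComplex (V ⊕ W) :=
  ofGens ({σ | ∃ α, K.faces α ∧ σ = α.image Sum.inl} ∪
          {σ | ∃ β, L.faces β ∧ σ = β.image Sum.inr})

/-- The simplicial complex of a simple graph (vertices and edges). -/
def graphComplex {V : Type*} [DecidableEq V] (G : SimpleGraph V) : SComplex V :=
  ofGens ({σ | ∃ x, σ = {x}} ∪ {σ | ∃ x y, G.Adj x y ∧ σ = ({x, y} : Finset V)})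

/-- Attach a leaf (pendant edge) to `K` at the vertex `x`. -/
def attachLeaf {V : Type*} [DecidableEq V] (K : SComplex V) (x : V) : SComplex (V ⊕ Unit) :=
  ofGens ({σ | ∃ α, K.faces α ∧ σ = α.image Sum.inl} ∪
          {({Sum.inl x, Sum.inr ()} : Finset (V ⊕ Unit))})

/-- The cycle graph on `ZMod n`. -/
def cycleGraph (n : ℕ) : SimpleGraph (ZMod n) :=
  SimpleGraph.fromRel (fun i j => j = i + 1)

/-- Attach one new leaf to every vertex of a graph. -/
def addLeaves {V : Type*} [DecidableEq V] (G : SimpleGraph V) : SComplex (V ⊕ V) :=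
  ofGens ({σ | ∃ x y, G.Adj x y ∧ σ = ({Sum.inl x, Sum.inl y} : Finset (V ⊕ V))} ∪
          {σ | ∃ u, σ = ({Sum.inl u, Sum.inr u} : Finset (V ⊕ V))})

/-- The geometric realization of `K`, inside `V → ℝ`. -/
def realization {V : Type*} (K : SComplex V) : Set (V → ℝ) :=
  {f | ∃ σ, K.faces σ ∧ (∀ x, 0 ≤ f x) ∧ (∀ x, f x ≠ 0 → x ∈ σ) ∧ ∑ x ∈ σ, f x = 1}

/-- A Hasse-diagram edge of a poset: a covering pair. -/
structure HEdge (P : Type*) [PartialOrder P] where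
  lo : P
  hi : P
  cov : lo ⋖ hi

noncomputable instance {P : Type*} [PartialOrder P] : DecidableEq (HEdge P) :=
  Classical.decEq _

def HEdge.Compat {P : Type*} [PartialOrder P] (p q : HEdge P) : Prop :=
  p.lo ≠ q.lo ∧ p.lo ≠ q.hi ∧ p.hi ≠ q.lo ∧ p.hi ≠ q.hi

def HasPosetCycle {P : Type*} [PartialOrder P] (W : Set (HEdge P)) : Prop :=
  ∃ k : ℕ, 0 < k ∧ ∃ c : ZMod k → HEdge P, (∀ i, c i ∈ W) ∧
    ∀ i, (c (i + 1)).lo ⋖ (c i).hi ∧ (c (i + 1)).lo ≠ (c i).lo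

/-- The generalized Morse complex `f(P)` of a poset: simplices are acyclic
matchings of the Hasse diagram of `P`. -/
def genMorse (P : Type*) [PartialOrder P] : SComplex (HEdge P) where
  faces S := S.Nonempty ∧ (∀ p ∈ S, ∀ q ∈ S, p ≠ q → HEdge.Compat p q) ∧
    ¬ HasPosetCycle {p | p ∈ S}
  not_empty h := by simpa using h.1
  down_closed := by
    rintro σ τ ⟨-, hm, hc⟩ hsub hne
    refine ⟨hne, fun p hp q hq h => hm p (hsub hp) q (hsub hq) h, fun h => hc ?_⟩
    obtain ⟨k, hk, c, hc', hp⟩ := h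
    exact ⟨k, hk, c, fun i => hsub (hc' i), hp⟩

/-- The automorphism group of a simplicial complex, as a subgroup of `Perm V`. -/
def autGroup {V : Type*} [DecidableEq V] (K : SComplex V) : Subgroup (Equiv.Perm V) where
  carrier := {e | ∀ σ : Finset V, K.faces σ ↔ K.faces (σ.image e)}
  one_mem' := by intro σ; simp
  mul_mem' := by
    intro a b ha hb σ
    rw [hb σ, ha (σ.image b)]
    simp [Finset.image_image, Equiv.Perm.coe_mul]
  inv_mem' := by
    intro a ha σ
    have := ha (σ.image ⇑a⁻¹)
    simpa [Finset.image_image, Function.comp_def,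
      Finset.image_id'] using this.symm

/-- The full subcomplex of `K` on a set `S` of vertices. -/
def restrictTo {V : Type*} (K : SComplex V) (S : Set V) : Finset V → Prop :=
  fun σ => K.faces σ ∧ ∀ x ∈ σ, x ∈ S

/-- `S` spans a fully connected subcomplex: `K = (K∣S) * (K∣Sᶜ)`. -/
def FullyConnected {V : Type*} [DecidableEq V] (K : SComplex V) (S : Set V) : Prop :=
  ∀ σ : Finset V, K.faces σ ↔ (σ.Nonempty ∧ ∃ α β : Finset V,
    (restrictTo K S α ∨ α = ∅) ∧ ((K.faces β ∧ ∀ x ∈ β, x ∉ S) ∨ β = ∅) ∧ σ = α ∪ β)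

/-- The primitive pair `(x, xy)` on an edge `{x,y}`. -/
def edgePair {V : Type*} [DecidableEq V] (K : SComplex V) (x y : V) (hxy : x ≠ y)
    (h : K.faces {x, y}) : VPair K where
  lo := {x}
  hi := {x, y}
  lo_face := K.down_closed h (by simp) (Finset.singleton_nonempty x)
  hi_face := h
  lo_sub := by simp
  card_eq := by
    rw [Finset.card_singleton, Finset.card_insert_of_notMem (by simp [hxy]),
      Finset.card_singleton]

section Aux

lemma VPair.ext' {V : Type*} {K : SComplex V} {p q : VPair K}
    (h1 : p.lo = q.lo) (h2 : p.hi = q.hi) : p = q := by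
  cases p; cases q; cases h1; cases h2; rfl

lemma singleton_morse_face {V : Type*} {K : SComplex V} (p : VPair K) :
    (MorseComplex K).faces {p} := by
  refine ⟨Finset.singleton_nonempty p, ?_, ?_⟩
  · intro a ha b hb hab
    simp only [Set.mem_setOf_eq, Finset.mem_singleton] at ha hb
    exact absurd (ha.trans hb.symm) hab
  · rintro ⟨k, hk, c, hc, hpath⟩
    have h0 := (hpath 0).2.1
    have e1 : c (0 + 1) = p := by simpa using hc (0 + 1)
    have e0 : c 0 = p := by simpa using hc 0
    rw [e1, e0] at h0
    exact h0 rfl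

lemma even_card_of_invol {α : Type*} [DecidableEq α] :
    ∀ (s : Finset α) (f : α → α), (∀ x ∈ s, f x ∈ s) → (∀ x ∈ s, f (f x) = x) →
    (∀ x ∈ s, f x ≠ x) → Even s.card := by
  intro s
  induction s using Finset.strongInduction with
  | _ s ih =>
    intro f hmem hinv hne
    rcases s.eq_empty_or_nonempty with rfl | ⟨x, hx⟩
    · simp
    · have hfx : f x ∈ s.erase x := Finset.mem_erase.mpr ⟨hne x hx, hmem x hx⟩
      set s' := (s.erase x).erase (f x) with hs'
      have hsub : s' ⊆ s := (Finset.erase_subset _ _).trans (Finset.erase_subset _ _)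
      have hss : s' ⊂ s := by
        refine ⟨hsub, fun h => ?_⟩
        have := Finset.mem_erase.mp (Finset.mem_erase.mp (h hx)).2
        exact this.1 rfl
      have hmem' : ∀ y ∈ s', f y ∈ s' := by
        intro y hy
        obtain ⟨hy1, hy2, hy3⟩ : y ≠ f x ∧ y ≠ x ∧ y ∈ s := by
          have := Finset.mem_erase.mp hy
          exact ⟨this.1, (Finset.mem_erase.mp this.2).1, (Finset.mem_erase.mp this.2).2⟩
        refine Finset.mem_erase.mpr ⟨?_, Finset.mem_erase.mpr ⟨?_, hmem y hy3⟩⟩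
        · intro h
          exact hy2 (by rw [← hinv y hy3, h, hinv x hx])
        · intro h
          exact hy1 (by rw [← hinv y hy3, h])
      have heven := ih s' hss f hmem' (fun y hy => hinv y (hsub hy)) (fun y hy => hne y (hsub hy))
      have hc1 : (s.erase x).card = s.card - 1 := Finset.card_erase_of_mem hx
      have hc2 : s'.card = (s.erase x).card - 1 := Finset.card_erase_of_mem hfx
      have hpos : 0 < (s.erase x).card := Finset.card_pos.mpr ⟨f x, hfx⟩
      have hxpos : 0 < s.card := Finset.card_pos.mpr ⟨x, hx⟩
      rw [Nat.even_iff] at heven ⊢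
      omega

end Aux

/-- the join of the path with two edges and a single edge is not
isomorphic to the Morse complex of any simplicial complex. -/
theorem stmt_10 :
    ∀ (W : Type*) (N : SComplex W),
      ¬ Nonempty (ComplexIso
        (sJoin (graphComplex (SimpleGraph.pathGraph 3))
          (graphComplex (SimpleGraph.pathGraph 2))).faces
        (MorseComplex N).faces) := by
  intro W N hne
  obtain ⟨I⟩ := hne
  classical
  -- every vertex of the join is a face
  have hvert : ∀ x : Fin 3 ⊕ Fin 2,
      (sJoin (graphComplex (SimpleGraph.pathGraph 3))
        (graphComplex (SimpleGraph.pathGraph 2))).faces {x} := by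
    rintro (i | j)
    · exact ⟨Finset.singleton_nonempty _, {Sum.inl i},
        ⟨{i}, ∅, Or.inl ⟨Finset.singleton_nonempty _, {i}, Or.inl ⟨i, rfl⟩, subset_rfl⟩,
          Or.inr rfl, by simp⟩, subset_rfl⟩
    · exact ⟨Finset.singleton_nonempty _, {Sum.inr j},
        ⟨∅, {j}, Or.inr rfl, Or.inl ⟨Finset.singleton_nonempty _, {j}, Or.inl ⟨j, rfl⟩, subset_rfl⟩,
          by simp⟩, subset_rfl⟩
  -- the iso induces an equivalence of vertex types
  let e : (Fin 3 ⊕ Fin 2) ≃ VPair N :=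
    { toFun := I.toFun
      invFun := I.invFun
      left_inv := fun x => I.left_inv x (hvert x)
      right_inv := fun p => I.right_inv p (singleton_morse_face p) }
  haveI : Fintype (VPair N) := Fintype.ofEquiv _ e
  have hcard : Fintype.card (VPair N) = 5 := by
    rw [← Fintype.card_congr e]; simp
  by_cases h3 : ∃ τ, N.faces τ ∧ τ.card = 3
  · -- N contains a 2-simplex: at least 9 primitive pairs
    obtain ⟨τ, hτ, hτ3⟩ := h3
    obtain ⟨a, b, c, hab, hac, hbc, hτeq⟩ := Finset.card_eq_three.mp hτ3
    set v : Fin 3 → W := fun i => if i = 0 then a else if i = 1 then b else c with hv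
    have hvmem : ∀ i, v i ∈ τ := by
      intro i; rw [hv]; subst hτeq; fin_cases i <;> simp
    have hvinj : Function.Injective v := by
      intro i j h; rw [hv] at h; simp only at h; fin_cases i <;> fin_cases j <;> simp_all
    let diag : Fin 3 → VPair N := fun i =>
      { lo := τ.erase (v i)
        hi := τ
        lo_face := N.down_closed hτ (Finset.erase_subset _ _)
          (Finset.card_pos.mp (by rw [Finset.card_erase_of_mem (hvmem i), hτ3]; norm_num))
        hi_face := hτ
        lo_sub := Finset.erase_subset _ _
        card_eq := by rw [Finset.card_erase_of_mem (hvmem i), hτ3] }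
    let off : ∀ (i j : Fin 3), i ≠ j → VPair N := fun i j hij =>
      { lo := {v i}
        hi := {v i, v j}
        lo_face := N.down_closed hτ (Finset.singleton_subset_iff.mpr (hvmem i))
          (Finset.singleton_nonempty _)
        hi_face := N.down_closed hτ
          (Finset.insert_subset (hvmem i) (Finset.singleton_subset_iff.mpr (hvmem j)))
          ⟨v i, Finset.mem_insert_self _ _⟩
        lo_sub := Finset.singleton_subset_iff.mpr (Finset.mem_insert_self _ _)
        card_eq := by
          rw [Finset.card_insert_of_notMem
              (by simp only [Finset.mem_singleton]; exact fun h => hij (hvinj h)),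
            Finset.card_singleton, Finset.card_singleton] }
    let f : Fin 3 × Fin 3 → VPair N := fun ij =>
      if h : ij.1 = ij.2 then diag ij.1 else off ij.1 ij.2 h
    have hdiaglo : ∀ i, (diag i).lo = τ.erase (v i) := fun _ => rfl
    have hfinj : Function.Injective f := by
      rintro ⟨i, j⟩ ⟨i', j'⟩ h
      simp only [f] at h
      split_ifs at h with h1 h2 h2
      · -- both diagonal
        subst h1; subst h2
        have hlo := congrArg VPair.lo h
        simp only [diag] at hlo
        have : i = i' := by
          by_contra hne'
          have hvne : v i ≠ v i' := fun hh => hne' (hvinj hh)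
          have : v i' ∈ τ.erase (v i) := Finset.mem_erase.mpr ⟨hvne.symm, hvmem i'⟩
          rw [hlo] at this
          exact (Finset.mem_erase.mp this).1 rfl
        simp [this]
      · have hhi := congrArg (fun p => p.hi.card) h
        simp only [diag, off, hτ3] at hhi
        rw [Finset.card_insert_of_notMem
            (by simp only [Finset.mem_singleton]; exact fun hh => h2 (hvinj hh)),
          Finset.card_singleton] at hhi
        omega
      · have hhi := congrArg (fun p => p.hi.card) h
        simp only [diag, off, hτ3] at hhi
        rw [Finset.card_insert_of_notMem
            (by simp only [Finset.mem_singleton]; exact fun hh => h1 (hvinj hh)),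
          Finset.card_singleton] at hhi
        omega
      · -- both off-diagonal
        have hlo := congrArg VPair.lo h
        have hhi := congrArg VPair.hi h
        simp only [off] at hlo hhi
        have hii : i = i' := hvinj (Finset.singleton_injective hlo)
        subst hii
        have hjj : v j = v j' := by
          have : v j ∈ ({v i, v j'} : Finset W) := by rw [← hhi]; simp
          rcases Finset.mem_insert.mp this with h' | h'
          · exact absurd (hvinj h') (Ne.symm h1)
          · exact Finset.mem_singleton.mp h'
        simp [hvinj hjj]
    have := Fintype.card_le_of_injective f hfinj
    rw [hcard] at this
    simp at this
  · -- N is a graph: primitive pair count is even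
    have hle : ∀ σ, N.faces σ → σ.card ≤ 2 := by
      intro σ hσ
      by_contra h
      push_neg at h
      obtain ⟨t, hts, ht3⟩ := Finset.exists_subset_card_eq h
      exact h3 ⟨t, N.down_closed hσ hts (Finset.card_pos.mp (by omega)), ht3⟩
    have hlopos : ∀ p : VPair N, 0 < p.lo.card := by
      intro p
      rcases Finset.eq_empty_or_nonempty p.lo with h | h
      · exact absurd (h ▸ p.lo_face) N.not_empty
      · exact Finset.card_pos.mpr h
    have hcards : ∀ p : VPair N, p.lo.card = 1 ∧ p.hi.card = 2 := by
      intro p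
      have h1 := hlopos p
      have h2 := hle _ p.hi_face
      have h3 := p.card_eq
      omega
    let ι : VPair N → VPair N := fun p =>
      { lo := p.hi \ p.lo
        hi := p.hi
        lo_face := N.down_closed p.hi_face (Finset.sdiff_subset)
          (Finset.card_pos.mp (by
            rw [Finset.card_sdiff_of_subset p.lo_sub, (hcards p).1, (hcards p).2]; norm_num))
        hi_face := p.hi_face
        lo_sub := Finset.sdiff_subset
        card_eq := by
          rw [Finset.card_sdiff_of_subset p.lo_sub, (hcards p).1, (hcards p).2] }
    have heven : Even (Finset.univ : Finset (VPair N)).card := by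
      apply even_card_of_invol Finset.univ ι
      · intro x _; exact Finset.mem_univ _
      · intro p _
        refine VPair.ext' ?_ rfl
        exact Finset.sdiff_sdiff_eq_self p.lo_sub
      · intro p _ h
        have hlo := congrArg VPair.lo h
        obtain ⟨x, hx⟩ := Finset.card_pos.mp (hlopos p)
        have : x ∈ p.hi \ p.lo := by rw [show p.hi \ p.lo = (ι p).lo from rfl, hlo]; exact hx
        exact (Finset.mem_sdiff.mp this).2 hx
    rw [Finset.card_univ, hcard] at heven
    exact absurd heven (by decide)
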